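/- Let u < v be real numbers, let γ(u,v) = { w ∈ ℍ : |w − (u+v)/2| = (v−u)/2 } be the hyperbolic geodesic of the upper half-plane ℍ with ideal endpoints u and v, and let D ≥ 0. If there exists a point z ∈ γ(u,v) with dist_ℍ(i, z) ≤ D, then v − u ≥ 2 e^{−D}. -/

import Mathlib

open UpperHalfPlane

open scoped UpperHalfPlane

/-- The hyperbolic geodesic of the upper half-plane with ideal endpoints `u`
and `v`: the Euclidean semicircle over the segment from `u` to `v`. -/
def geodesicSet (u v : ℝ) : Set ℍ :=
  {z : ℍ | ‖(z : ℂ) - (((u + v) / 2 : ℝ) : ℂ)‖ = |u - v| / 2}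

/-- A geodesic of the upper half-plane passing within hyperbolic distance `D`
of the basepoint `i` subtends a boundary interval of Euclidean length at least
`2 e^{−D}`. -/
theorem boundary_interval_ge_of_dist_le (u v : ℝ) (huv : u < v) (D : ℝ) (hD : 0 ≤ D)
    (hz : ∃ z ∈ geodesicSet u v, dist UpperHalfPlane.I z ≤ D) :
    v - u ≥ 2 * Real.exp (-D) := by
  obtain ⟨z, hzg, hzd⟩ := hz
  -- |log z.im| ≤ D
  have hlog : |Real.log z.im| ≤ D := by
    have := UpperHalfPlane.dist_log_im_le UpperHalfPlane.I z
    clear this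
    calc |Real.log z.im| = dist (Real.log UpperHalfPlane.I.im) (Real.log z.im) := by
          simp [Real.dist_eq, UpperHalfPlane.I_im, abs_sub_comm]
      _ ≤ dist UpperHalfPlane.I z := UpperHalfPlane.dist_log_im_le _ _
      _ ≤ D := hzd
  have him : Real.exp (-D) ≤ z.im := by
    have h1 : -D ≤ Real.log z.im := neg_le_of_abs_le hlog
    calc Real.exp (-D) ≤ Real.exp (Real.log z.im) := Real.exp_le_exp.2 h1
      _ = z.im := Real.exp_log z.im_pos
  -- z.im ≤ |z - c| = (v - u)/2
  have habs : ‖(z : ℂ) - (((u + v) / 2 : ℝ) : ℂ)‖ = (v - u) / 2 := by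
    rw [hzg, abs_of_neg (by linarith)]
    ring
  have him2 : z.im ≤ (v - u) / 2 := by
    have := Complex.abs_im_le_norm ((z : ℂ) - (((u + v) / 2 : ℝ) : ℂ))
    simp only [Complex.sub_im, Complex.ofReal_im, sub_zero] at this
    rw [habs] at this
    calc z.im = (z : ℂ).im := rfl
      _ ≤ |(z : ℂ).im| := le_abs_self _
      _ ≤ (v - u) / 2 := this
  linarith [him.trans him2]
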